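/- arXiv:1912.09786 — 2 statements merged into one kernel-verified Lean document; each statement's English description precedes it below -/
import Mathlib

section
/- Let A be a commutative ring and a₁, …, a_k ∈ A a regular sequence. Then the module of syzygies of (a₁, …, a_k), i.e. the kernel of the map A^k → A sending (c₁,…,c_k) to Σ cᵢaᵢ, is generated by the Koszul relations aᵢ e_j − a_j eᵢ for 1 ≤ i < j ≤ k, where e₁,…,e_k is the standard basis of A^k. -/
private theorem koszul_syz {A : Type*} [CommRing A] {k : ℕ} (a : Fin k → A) {c : Fin k → A}
    (h : c ∈ Submodule.span A {v : Fin k → A | ∃ i j : Fin k, i < j ∧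
          v = a i • (Pi.single j 1 : Fin k → A) - a j • (Pi.single i 1 : Fin k → A)}) :
    ∑ i, c i * a i = 0 := by
  let φ : (Fin k → A) →ₗ[A] A :=
    { toFun := fun c => ∑ i, c i * a i
      map_add' := fun x y => by simp [add_mul, Finset.sum_add_distrib]
      map_smul' := fun r x => by simp [mul_assoc, Finset.mul_sum] }
  have hle : Submodule.span A {v : Fin k → A | ∃ i j : Fin k, i < j ∧
          v = a i • (Pi.single j 1 : Fin k → A) - a j • (Pi.single i 1 : Fin k → A)}
      ≤ LinearMap.ker φ := by
    rw [Submodule.span_le]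
    rintro v ⟨i, j, hij, rfl⟩
    simp only [SetLike.mem_coe, LinearMap.mem_ker]
    show ∑ t, (a i • (Pi.single j 1 : Fin k → A) - a j • (Pi.single i 1 : Fin k → A)) t * a t = 0
    simp [Pi.single_apply, sub_mul, mul_sub, Finset.sum_sub_distrib, mul_ite, mul_zero,
      Finset.sum_ite_eq, Finset.sum_ite_eq', mul_comm]
  exact hle h

private theorem koszul_main {A : Type*} [CommRing A] {k : ℕ} (a : Fin k → A)
    (hreg : ∀ i : Fin k, ∀ x : A,
      x * a i ∈ Ideal.span (a '' {j : Fin k | j < i}) →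
      x ∈ Ideal.span (a '' {j : Fin k | j < i})) :
    ∀ n : ℕ, ∀ c : Fin k → A, (∀ i : Fin k, n ≤ i.val → c i = 0) →
      ∑ i, c i * a i = 0 →
      c ∈ Submodule.span A {v : Fin k → A | ∃ i j : Fin k, i < j ∧
          v = a i • (Pi.single j 1 : Fin k → A) - a j • (Pi.single i 1 : Fin k → A)} := by
  intro n
  induction n with
  | zero =>
    intro c hc _
    have : c = 0 := funext fun i => hc i (Nat.zero_le _)
    simp [this]
  | succ n ih =>
    intro c hc hs
    by_cases hn : n < k
    · set m : Fin k := ⟨n, hn⟩ with hm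
      -- split the sum
      have h1 : ∑ i ∈ Finset.univ.filter (fun i => i ≤ m), c i * a i = 0 := by
        rw [← hs]
        refine Finset.sum_subset (Finset.filter_subset _ _) ?_
        intro i _ hi
        have hgt : ¬ i ≤ m := by simpa using hi
        have : n + 1 ≤ i.val := by
          have : m < i := lt_of_not_ge hgt
          exact this
        rw [hc i this, zero_mul]
      have hfe : Finset.univ.filter (fun i => i ≤ m) =
          insert m (Finset.univ.filter (fun i => i < m)) := by
        ext i
        simp [le_iff_lt_or_eq, or_comm]
      rw [hfe, Finset.sum_insert (by simp)] at h1
      have hmem : c m * a m ∈ Ideal.span (a '' {j : Fin k | j < m}) := by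
        have : c m * a m = -∑ i ∈ Finset.univ.filter (fun i => i < m), c i * a i :=
          eq_neg_of_add_eq_zero_left h1
        rw [this]
        refine neg_mem (Submodule.sum_mem _ ?_)
        intro i hi
        have hi' : i < m := by simpa using hi
        exact Ideal.mul_mem_left _ _ (Ideal.subset_span ⟨i, hi', rfl⟩)
      have hd := hreg m (c m) hmem
      obtain ⟨N, f, g, hg⟩ := Submodule.mem_span_set'.mp hd
      choose j hjm hja using fun t => (g t).2
      set s : Fin k → A := ∑ t, f t • (a (j t) • (Pi.single m 1 : Fin k → A)
          - a m • (Pi.single (j t) 1 : Fin k → A)) with hsdef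
      have hsspan : s ∈ Submodule.span A {v : Fin k → A | ∃ i j : Fin k, i < j ∧
          v = a i • (Pi.single j 1 : Fin k → A) - a j • (Pi.single i 1 : Fin k → A)} := by
        refine Submodule.sum_mem _ fun t _ => Submodule.smul_mem _ _ (Submodule.subset_span ?_)
        exact ⟨j t, m, hjm t, rfl⟩
      have hsm : s m = c m := by
        rw [← hg, hsdef]
        rw [Finset.sum_apply]
        refine Finset.sum_congr rfl fun t _ => ?_
        have hne : j t ≠ m := ne_of_lt (hjm t)
        simp [Pi.single_apply, hne, hja, smul_eq_mul]
      have hc' : ∀ i : Fin k, n ≤ i.val → (c - s) i = 0 := by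
        intro i hi
        by_cases him : i = m
        · subst him
          simp [hsm]
        · have hi1 : n + 1 ≤ i.val := by
            rcases Nat.lt_or_ge n i.val with h | h
            · exact h
            · exact absurd (Fin.ext (le_antisymm h hi) : i = m) him
          have hci : c i = 0 := hc i hi1
          have hsi : s i = 0 := by
            rw [hsdef, Finset.sum_apply]
            refine Finset.sum_eq_zero fun t _ => ?_
            have h1 : i ≠ m := him
            have h2 : i ≠ j t := by
              intro h
              have := hjm t
              rw [← h] at this
              have : i.val < n := this
              omega
            simp [Pi.single_apply, h1, h2]
          simp [hci, hsi]
      have hs' : ∑ i, (c - s) i * a i = 0 := by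
        have hssyz : ∑ i, s i * a i = 0 := koszul_syz a hsspan
        simp only [Pi.sub_apply, sub_mul, Finset.sum_sub_distrib, hs, hssyz, sub_zero]
      have := ih (c - s) hc' hs'
      have : c = (c - s) + s := by ring
      rw [this]
      exact Submodule.add_mem _ (ih (c - s) hc' hs') hsspan
    · refine ih c (fun i hi => ?_) hs
      exact absurd (lt_of_lt_of_le i.isLt (not_lt.mp hn)) (not_lt.mpr hi)

/-- If `a₁,…,a_k` is a regular sequence in a commutative ring `A` (each `aᵢ` is a
nonzerodivisor modulo the preceding ones and the ideal generated is proper), then the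
syzygy module `{c : Σ cᵢaᵢ = 0}` is generated by the Koszul relations
`aᵢ e_j − a_j eᵢ` for `i < j`. -/
theorem stmt5 {A : Type*} [CommRing A] {k : ℕ} (a : Fin k → A)
    (hproper : Ideal.span (Set.range a) ≠ ⊤)
    (hreg : ∀ i : Fin k, ∀ x : A,
      x * a i ∈ Ideal.span (a '' {j : Fin k | j < i}) →
      x ∈ Ideal.span (a '' {j : Fin k | j < i})) :
    {c : Fin k → A | ∑ i, c i * a i = 0} =
      ↑(Submodule.span A {v : Fin k → A | ∃ i j : Fin k, i < j ∧
          v = a i • (Pi.single j 1 : Fin k → A) - a j • (Pi.single i 1 : Fin k → A)}) := by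
  ext c
  constructor
  · intro hc
    exact koszul_main a hreg k c (fun i hi => absurd i.isLt (not_lt.mpr hi)) hc
  · intro hc
    exact koszul_syz a hc
end

section
/- Let h be an element of the formal (or convergent) power series ring ℂ[[x₁,…,x_n]] with h(0) = 0. Then every p ∈ ℂ[[x₁,…,x_n,t]] can be written uniquely as p = q·(t − h) + r with q ∈ ℂ[[x₁,…,x_n,t]] and r ∈ ℂ[[x₁,…,x_n]]; moreover r(x) = p(x, h(x)), i.e. r is obtained from p by substituting h for t. -/
open MvPowerSeries Finset

noncomputable section

variable {n : ℕ} {h : MvPowerSeries (Fin n) ℂ}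

/-- degree function -/
def wdeg (d : Fin n →₀ ℕ) : ℕ := d.sum fun _ e => e

lemma wdeg_add (u v : Fin n →₀ ℕ) : wdeg (u + v) = wdeg u + wdeg v :=
  Finsupp.sum_add_index' (fun _ => rfl) (fun _ _ _ => rfl)

lemma wdeg_pos {v : Fin n →₀ ℕ} (hv : v ≠ 0) : 0 < wdeg v := by
  rcases Finsupp.ne_iff.mp hv with ⟨a, ha⟩
  simp only [Finsupp.coe_zero, Pi.zero_apply] at ha
  have h1 : v a ≤ wdeg v :=
    Finset.single_le_sum (f := fun a => v a) (fun _ _ => Nat.zero_le _)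
      (Finsupp.mem_support_iff.mpr ha)
  omega

lemma coeff_hpow (hh : constantCoeff h = 0) :
    ∀ (k : ℕ) (d : Fin n →₀ ℕ), wdeg d < k → coeff (R := ℂ) d (h ^ k) = 0 := by
  intro k
  induction k with
  | zero => intro d hd; omega
  | succ k ih =>
    intro d hd
    rw [pow_succ, coeff_mul]
    apply Finset.sum_eq_zero
    intro uv huv
    have hd' : uv.1 + uv.2 = d := Finset.HasAntidiagonal.mem_antidiagonal.mp huv
    by_cases hv : uv.2 = 0
    · rw [hv, coeff_zero_eq_constantCoeff, hh, mul_zero]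
    · have h1 : 0 < wdeg uv.2 := wdeg_pos hv
      have h2 : wdeg uv.1 + wdeg uv.2 = wdeg d := by rw [← wdeg_add, hd']
      rw [ih uv.1 (by omega), zero_mul]

lemma coeff_mul_hpow (hh : constantCoeff h = 0)
    (a : MvPowerSeries (Fin n) ℂ) (k : ℕ) (d : Fin n →₀ ℕ) (hd : wdeg d < k) :
    coeff (R := ℂ) d (a * h ^ k) = 0 := by
  rw [coeff_mul]
  apply Finset.sum_eq_zero
  intro uv huv
  have hd' : uv.1 + uv.2 = d := Finset.HasAntidiagonal.mem_antidiagonal.mp huv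
  have h2 : wdeg uv.1 + wdeg uv.2 = wdeg d := by rw [← wdeg_add, hd']
  rw [coeff_hpow hh k uv.2 (by omega), mul_zero]

end

noncomputable section

variable {n : ℕ} (h : MvPowerSeries (Fin n) ℂ) (p : PowerSeries (MvPowerSeries (Fin n) ℂ))

/-- partial substitution sums -/
def wS (m M : ℕ) : MvPowerSeries (Fin n) ℂ :=
  ∑ k ∈ Finset.range M, PowerSeries.coeff (m + k) p * h ^ k

/-- full substitution of `h` for `t` in the tail of `p` starting at degree `m` -/
def wQ (m : ℕ) : MvPowerSeries (Fin n) ℂ :=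
  fun d => MvPowerSeries.coeff (R := ℂ) d (wS h p m (wdeg d + 1))

lemma coeff_wQ (m : ℕ) (d : Fin n →₀ ℕ) :
    MvPowerSeries.coeff (R := ℂ) d (wQ h p m) = MvPowerSeries.coeff (R := ℂ) d (wS h p m (wdeg d + 1)) := rfl

variable {h} in
lemma coeff_wS_stab (hh : MvPowerSeries.constantCoeff h = 0)
    (m M : ℕ) (d : Fin n →₀ ℕ) (hd : wdeg d < M) :
    MvPowerSeries.coeff (R := ℂ) d (wS h p m M) = MvPowerSeries.coeff (R := ℂ) d (wQ h p m) := by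
  rw [coeff_wQ]
  unfold wS
  rw [map_sum, map_sum]
  refine (Finset.sum_subset (Finset.range_subset_range.2 hd) ?_).symm
  intro k hk hk'
  simp only [Finset.mem_range] at hk'
  exact coeff_mul_hpow hh _ k d (by omega)

variable {h} in
lemma wQ_rec (hh : MvPowerSeries.constantCoeff h = 0) (m : ℕ) :
    wQ h p m = PowerSeries.coeff m p + wQ h p (m + 1) * h := by
  ext d
  rw [map_add, coeff_wQ]
  have h1 : MvPowerSeries.coeff (R := ℂ) d (wQ h p (m + 1) * h)
      = MvPowerSeries.coeff (R := ℂ) d (wS h p (m + 1) (wdeg d) * h) := by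
    classical
    rw [MvPowerSeries.coeff_mul, MvPowerSeries.coeff_mul]
    refine Finset.sum_congr rfl fun uv huv => ?_
    by_cases hv : uv.2 = 0
    · rw [hv, MvPowerSeries.coeff_zero_eq_constantCoeff, hh, mul_zero, mul_zero]
    · have hd' : uv.1 + uv.2 = d := Finset.HasAntidiagonal.mem_antidiagonal.mp huv
      have h2 : wdeg uv.1 + wdeg uv.2 = wdeg d := by rw [← wdeg_add, hd']
      have h3 : 0 < wdeg uv.2 := wdeg_pos hv
      rw [coeff_wS_stab p hh (m + 1) (wdeg d) uv.1 (by omega)]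
  rw [h1]
  have h4 : wS h p (m + 1) (wdeg d) * h
      = ∑ k ∈ Finset.range (wdeg d), PowerSeries.coeff (m + (k + 1)) p * h ^ (k + 1) := by
    unfold wS
    rw [Finset.sum_mul]
    refine Finset.sum_congr rfl fun k _ => ?_
    rw [mul_assoc, ← pow_succ]
    ring_nf
  rw [h4]
  unfold wS
  rw [Finset.sum_range_succ']
  simp [map_add]
  ring

end

section
variable {n : ℕ} {h : MvPowerSeries (Fin n) ℂ}

lemma coeff_rel {p : PowerSeries (MvPowerSeries (Fin n) ℂ)}
    {q : PowerSeries (MvPowerSeries (Fin n) ℂ)} {r : MvPowerSeries (Fin n) ℂ}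
    (hpq : p = q * (PowerSeries.X - PowerSeries.C h) + PowerSeries.C r) :
    (PowerSeries.coeff 0 p = r - PowerSeries.coeff 0 q * h) ∧
    (∀ m, PowerSeries.coeff (m + 1) p
      = PowerSeries.coeff m q - PowerSeries.coeff (m + 1) q * h) := by
  constructor
  · have := congrArg (PowerSeries.coeff 0) hpq
    simp [mul_sub, PowerSeries.coeff_zero_mul_X, PowerSeries.coeff_mul_C] at this
    rw [PowerSeries.coeff_zero_eq_constantCoeff]
    linear_combination this
  · intro m
    have := congrArg (PowerSeries.coeff (m + 1)) hpq
    simpa [mul_sub, PowerSeries.coeff_succ_mul_X, PowerSeries.coeff_mul_C,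
      PowerSeries.coeff_C] using this

lemma zero_lem (hh : MvPowerSeries.constantCoeff h = 0)
    {q : PowerSeries (MvPowerSeries (Fin n) ℂ)} {r : MvPowerSeries (Fin n) ℂ}
    (hqr : q * (PowerSeries.X - PowerSeries.C h) + PowerSeries.C r = 0) :
    q = 0 ∧ r = 0 := by
  have hrel := coeff_rel (p := (0 : PowerSeries (MvPowerSeries (Fin n) ℂ))) hqr.symm
  have rel1 : ∀ m, PowerSeries.coeff m q = PowerSeries.coeff (m + 1) q * h := by
    intro m
    have := hrel.2 m
    simp only [map_zero] at this
    linear_combination -this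
  have rel2 : ∀ k m, PowerSeries.coeff m q = PowerSeries.coeff (m + k) q * h ^ k := by
    intro k
    induction k with
    | zero => simp
    | succ k ih =>
      intro m
      rw [rel1 m, ih (m + 1), mul_assoc]
      have he : m + 1 + k = m + (k + 1) := by omega
      rw [he, pow_succ]
  have hq : q = 0 := by
    ext m d
    rw [rel2 (wdeg d + 1) m, coeff_mul_hpow hh _ _ d (by omega)]
    simp
  refine ⟨hq, ?_⟩
  have := hrel.1
  rw [hq] at this
  simp only [map_zero] at this
  linear_combination -this
end

/-- Weierstrass division by `t − h`:  let `h ∈ ℂ[[x₁,…,x_n]]` with `h(0) = 0`.  Every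
`p ∈ ℂ[[x₁,…,x_n]][[t]]` can be written uniquely as `p = q·(t − h) + r` with
`r ∈ ℂ[[x₁,…,x_n]]`; moreover `r = p(x, h(x))`, i.e. `r` is obtained by substituting
`h` for `t` (expressed here by the fact that, for every `N`, `r` agrees with the
partial substitution `Σ_{k<N} p_k h^k` in all coefficients of total degree `< N`). -/
theorem stmt10 (n : ℕ) (h : MvPowerSeries (Fin n) ℂ)
    (hh : MvPowerSeries.constantCoeff (σ := Fin n) (R := ℂ) h = 0)
    (p : PowerSeries (MvPowerSeries (Fin n) ℂ)) :
    (∃! qr : PowerSeries (MvPowerSeries (Fin n) ℂ) × MvPowerSeries (Fin n) ℂ,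
      p = qr.1 * (PowerSeries.X - PowerSeries.C h) + PowerSeries.C qr.2) ∧
    (∀ (q : PowerSeries (MvPowerSeries (Fin n) ℂ)) (r : MvPowerSeries (Fin n) ℂ),
      p = q * (PowerSeries.X - PowerSeries.C h) + PowerSeries.C r →
      ∀ (N : ℕ) (d : Fin n →₀ ℕ), (d.sum fun _ e => e) < N →
        MvPowerSeries.coeff (R := ℂ) d
          (r - ∑ k ∈ Finset.range N, PowerSeries.coeff k p * h ^ k) = 0) := by
  have hmain : p = (PowerSeries.mk fun m => wQ h p (m + 1)) *
      (PowerSeries.X - PowerSeries.C h) + PowerSeries.C (wQ h p 0) := by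
    apply PowerSeries.ext
    intro m
    rw [mul_sub, map_add, map_sub]
    cases m with
    | zero =>
      rw [PowerSeries.coeff_zero_mul_X, PowerSeries.coeff_mul_C, PowerSeries.coeff_mk,
        PowerSeries.coeff_zero_C]
      linear_combination -wQ_rec p hh 0
    | succ m =>
      rw [PowerSeries.coeff_succ_mul_X, PowerSeries.coeff_mul_C, PowerSeries.coeff_mk,
        PowerSeries.coeff_mk, PowerSeries.coeff_C]
      simp only [Nat.succ_ne_zero, if_false]
      linear_combination -wQ_rec p hh (m + 1)
  constructor
  · refine ⟨(PowerSeries.mk fun m => wQ h p (m + 1), wQ h p 0), hmain, ?_⟩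
    rintro ⟨q', r'⟩ heq'
    have hdiff : (q' - PowerSeries.mk fun m => wQ h p (m + 1)) *
        (PowerSeries.X - PowerSeries.C h) + PowerSeries.C (r' - wQ h p 0) = 0 := by
      rw [map_sub]
      linear_combination heq'.symm.trans hmain
    obtain ⟨hq0, hr0⟩ := zero_lem hh hdiff
    simp only [Prod.mk.injEq]
    exact ⟨sub_eq_zero.mp hq0, sub_eq_zero.mp hr0⟩
  · intro q r hpq N d hd
    obtain ⟨rel0, rel⟩ := coeff_rel hpq
    have claim : ∀ N, r = (∑ k ∈ Finset.range (N + 1), PowerSeries.coeff k p * h ^ k)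
        + PowerSeries.coeff N q * h ^ (N + 1) := by
      intro N
      induction N with
      | zero =>
        simp only [zero_add, Finset.sum_range_one, pow_zero, mul_one, pow_one]
        linear_combination -rel0
      | succ N ih =>
        rw [Finset.sum_range_succ]
        linear_combination ih - h ^ (N + 1) * rel N
    obtain ⟨M, rfl⟩ : ∃ M, N = M + 1 := ⟨N - 1, by omega⟩
    have hr : r - ∑ k ∈ Finset.range (M + 1), PowerSeries.coeff k p * h ^ k
        = PowerSeries.coeff M q * h ^ (M + 1) := by
      linear_combination claim M
    rw [hr]
    exact coeff_mul_hpow hh _ _ d hd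
end
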